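/- Let A ∈ {0,1}^{m×n} be a matrix in which every row has exactly two ones (the edge-node incidence matrix of a graph). Two distinct vertices v and v' of Q*(A) are adjacent if and only if their joint saturation graph G(v,v') is connected. -/

import Mathlib

open Finset

/-- Support of a vector. -/
def supp {n : ℕ} (x : Fin n → ℝ) : Set (Fin n) := {j | x j ≠ 0}

/-- Support of the `t`-th row of a matrix. -/
def rowSupp {m n : ℕ} (A : Matrix (Fin m) (Fin n) ℝ) (t : Fin m) : Set (Fin n) :=
  {j | A t j ≠ 0}

def IsBinaryMatrix {m n : ℕ} (A : Matrix (Fin m) (Fin n) ℝ) : Prop :=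
  ∀ t j, A t j = 0 ∨ A t j = 1

def IsBinaryVec {n : ℕ} (x : Fin n → ℝ) : Prop := ∀ j, x j = 0 ∨ x j = 1

/-- The polyhedron `{x | A x ≥ b, x ≥ 0}`. -/
def polyP {m n : ℕ} (A : Matrix (Fin m) (Fin n) ℝ) (b : Fin m → ℝ) : Set (Fin n → ℝ) :=
  {x | (∀ i, b i ≤ ∑ j, A i j * x j) ∧ ∀ j, 0 ≤ x j}

/-- The linear relaxation `Q(A) = {x | A x ≥ 1, x ≥ 0}`. -/
def polyQ {m n : ℕ} (A : Matrix (Fin m) (Fin n) ℝ) : Set (Fin n → ℝ) :=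
  {x | (∀ i, 1 ≤ ∑ j, A i j * x j) ∧ ∀ j, 0 ≤ x j}

/-- The set covering polyhedron `Q*(A)`: convex hull of nonnegative integer solutions of
`A x ≥ 1`. -/
def Qstar {m n : ℕ} (A : Matrix (Fin m) (Fin n) ℝ) : Set (Fin n → ℝ) :=
  convexHull ℝ {x | (∀ j, ∃ k : ℕ, x j = k) ∧ ∀ i, 1 ≤ ∑ j, A i j * x j}

/-- A vertex of a convex set is an extreme point. -/
def IsVertex {n : ℕ} (S : Set (Fin n → ℝ)) (v : Fin n → ℝ) : Prop :=
  v ∈ S.extremePoints ℝ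

/-- Two distinct vertices are adjacent when they lie on a common edge, i.e. the segment
joining them is a face (extreme subset) of `S`. -/
def AdjacentVerts {n : ℕ} (S : Set (Fin n → ℝ)) (v w : Fin n → ℝ) : Prop :=
  v ≠ w ∧ IsVertex S v ∧ IsVertex S w ∧ IsExtreme ℝ S (segment ℝ v w)

/-- There is a row support `C` with `C ∩ supp v = {p}` and `C ∩ supp v' = {p'}`. -/
def jsgEdge {m n : ℕ} (A : Matrix (Fin m) (Fin n) ℝ) (v v' : Fin n → ℝ)
    (p p' : Fin n) : Prop :=
  ∃ t, rowSupp A t ∩ supp v = {p} ∧ rowSupp A t ∩ supp v' = {p'}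

/-- The joint saturation graph of `v` and `v'` with respect to `A`. -/
def JSG {m n : ℕ} (A : Matrix (Fin m) (Fin n) ℝ) (v v' : Fin n → ℝ) :
    SimpleGraph (Fin n) where
  Adj p p' := p ≠ p' ∧ (jsgEdge A v v' p p' ∨ jsgEdge A v v' p' p)
  symm := by constructor; intro p p' h; exact ⟨h.1.symm, h.2.symm⟩
  loopless := by constructor; intro p h; exact h.1 rfl

/-- The node set of the joint saturation graph: the symmetric difference of the supports. -/
def jsgNodes {n : ℕ} (v v' : Fin n → ℝ) : Set (Fin n) :=
  (supp v \ supp v') ∪ (supp v' \ supp v)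

def JSGConnected {m n : ℕ} (A : Matrix (Fin m) (Fin n) ℝ) (v v' : Fin n → ℝ) : Prop :=
  ∀ p ∈ jsgNodes v v', ∀ q ∈ jsgNodes v v', (JSG A v v').Reachable p q

/-- One of the two partite sets is contained in a single connected component. -/
def JSGPartiteConnected {m n : ℕ} (A : Matrix (Fin m) (Fin n) ℝ) (v v' : Fin n → ℝ) : Prop :=
  (∀ p ∈ supp v \ supp v', ∀ q ∈ supp v \ supp v', (JSG A v v').Reachable p q) ∨
  (∀ p ∈ supp v' \ supp v, ∀ q ∈ supp v' \ supp v, (JSG A v v').Reachable p q)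

/-- Exactly two components, one of which is an isolated node. -/
def JSGAlmostConnected {m n : ℕ} (A : Matrix (Fin m) (Fin n) ℝ) (v v' : Fin n → ℝ) : Prop :=
  ∃ q ∈ jsgNodes v v', (∀ p, ¬ (JSG A v v').Adj q p) ∧ (jsgNodes v v' \ {q}).Nonempty ∧
    ∀ p ∈ jsgNodes v v' \ {q}, ∀ r ∈ jsgNodes v v' \ {q}, (JSG A v v').Reachable p r

/-- The (directed) circular arc from `i` to `j` in `Fin n`. -/
def arc {n : ℕ} [NeZero n] (i j : Fin n) : Set (Fin n) :=
  {k | ∃ h : ℕ, h ≤ ((j - i : Fin n) : ℕ) ∧ k = i + (Fin.ofNat n h)}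

/-- A matrix is row circular if each row support is a circular arc. -/
def RowCircular {m n : ℕ} [NeZero n] (A : Matrix (Fin m) (Fin n) ℝ) : Prop :=
  ∀ t, ∃ i j : Fin n, rowSupp A t = arc i j

/-- The standard assumptions: binary, no dominating rows, between 2 and n-1 ones per row,
no all-zero or all-one column. -/
def StandardAssumptions {m n : ℕ} (A : Matrix (Fin m) (Fin n) ℝ) : Prop :=
  IsBinaryMatrix A ∧
  (∀ s t : Fin m, s ≠ t → ¬ rowSupp A s ⊆ rowSupp A t) ∧
  (∀ t, 2 ≤ (rowSupp A t).ncard ∧ (rowSupp A t).ncard ≤ n - 1) ∧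
  (∀ j : Fin n, (∃ t, A t j ≠ 0) ∧ (∃ t, A t j = 0))

/-- `a` and `b` occur consecutively (in either order) in the list `l`. -/
def ListConsec {α : Type*} (l : List α) (a b : α) : Prop :=
  ∃ k : ℕ, (l[k]? = some a ∧ l[k+1]? = some b) ∨ (l[k]? = some b ∧ l[k+1]? = some a)

/-- `a` and `b` occur cyclically consecutively (in either order) in the list `l`. -/
def CycConsec {α : Type*} (l : List α) (a b : α) : Prop :=
  ∃ k : ℕ, k < l.length ∧
    ((l[k]? = some a ∧ l[(k+1) % l.length]? = some b) ∨
     (l[k]? = some b ∧ l[(k+1) % l.length]? = some a))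

/-- The set `S` induces a path (possibly a single node) in `G`. -/
def IsPathOn {n : ℕ} (G : SimpleGraph (Fin n)) (S : Set (Fin n)) : Prop :=
  ∃ l : List (Fin n), l.Nodup ∧ (∀ x, x ∈ S ↔ x ∈ l) ∧
    (∀ a b, a ∈ S → G.Adj a b → ListConsec l a b) ∧
    (∀ a b, ListConsec l a b → G.Adj a b)

/-- The set `S` induces a cycle in `G`. -/
def IsCycleOn {n : ℕ} (G : SimpleGraph (Fin n)) (S : Set (Fin n)) : Prop :=
  ∃ l : List (Fin n), 3 ≤ l.length ∧ l.Nodup ∧ (∀ x, x ∈ S ↔ x ∈ l) ∧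
    (∀ a b, a ∈ S → G.Adj a b → CycConsec l a b) ∧
    (∀ a b, CycConsec l a b → G.Adj a b)

/-- `p` and `q` are cyclically consecutive elements of `S`. -/
def CyclConsecIn {n : ℕ} [NeZero n] (S : Set (Fin n)) (p q : Fin n) : Prop :=
  p ≠ q ∧ p ∈ S ∧ q ∈ S ∧ (arc p q ∩ S = {p, q} ∨ arc q p ∩ S = {p, q})

/-- The circulant matrix `C(n,2)` with row supports `{t, t+1}` (mod n). -/
def Cn2 (n : ℕ) [NeZero n] : Matrix (Fin n) (Fin n) ℝ :=
  fun t j => if j = t ∨ j = t + 1 then 1 else 0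

/-- Append a row to a matrix. -/
def appendRow {m n : ℕ} (A : Matrix (Fin m) (Fin n) ℝ) (a : Fin n → ℝ) :
    Matrix (Fin (m+1)) (Fin n) ℝ :=
  fun t j => if h : (t : ℕ) < m then A ⟨t, h⟩ j else a j

/-- A set of points is integral if all its extreme points are integer vectors. -/
def IsIntegralSet {n : ℕ} (S : Set (Fin n → ℝ)) : Prop :=
  ∀ x ∈ S.extremePoints ℝ, ∀ j, ∃ z : ℤ, x j = z

/-- A binary matrix is minimally nonideal if `Q(A)` is not integral but both restrictions
`Q(A) ∩ {x_i = 0}` and `Q(A) ∩ {x_i = 1}` are integral for every coordinate `i`. -/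
def MinimallyNonideal {m n : ℕ} (A : Matrix (Fin m) (Fin n) ℝ) : Prop :=
  ¬ IsIntegralSet (polyQ A) ∧
  ∀ i : Fin n, IsIntegralSet (polyQ A ∩ {x | x i = 0}) ∧
               IsIntegralSet (polyQ A ∩ {x | x i = 1})

/-- The matrix of the degenerate projective plane with `t+1` points and lines. -/
def Jmat (t : ℕ) : Matrix (Fin (t+1)) (Fin (t+1)) ℝ :=
  fun i j => if i = 0 then (if j = 0 then 0 else 1) else (if j = 0 ∨ j = i then 1 else 0)

/-- `A` is isomorphic to some degenerate projective plane matrix `J_t`, `t ≥ 2`. -/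
def IsoToDegenProjPlane {m n : ℕ} (A : Matrix (Fin m) (Fin n) ℝ) : Prop :=
  ∃ t : ℕ, 2 ≤ t ∧ ∃ (σ : Fin m ≃ Fin (t+1)) (τ : Fin n ≃ Fin (t+1)),
    ∀ i j, A i j = Jmat t (σ i) (τ j)

/-- `A₁` is the core of `A`: a square nonsingular row submatrix with `r` ones per row and
per column, all other rows of `A` having more than `r` ones. -/
def IsCore {m n : ℕ} (A : Matrix (Fin m) (Fin n) ℝ) (A₁ : Matrix (Fin n) (Fin n) ℝ)
    (r : ℕ) : Prop :=
  2 ≤ r ∧ A₁.det ≠ 0 ∧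
  (∃ f : Fin n → Fin m, Function.Injective f ∧ (∀ i, A₁ i = A (f i)) ∧
    ∀ t, t ∉ Set.range f → r < (rowSupp A t).ncard) ∧
  (∀ i, (rowSupp A₁ i).ncard = r) ∧ (∀ j, {i | A₁ i j ≠ 0}.ncard = r)

/-- `B₁` is the core of the blocker of `A`: a square nonsingular matrix whose rows are
binary vertices of `Q*(A)` with `s` ones per row and per column, all other binary
vertices of `Q*(A)` having more than `s` ones. -/
def IsBlockerCore {m n : ℕ} (A : Matrix (Fin m) (Fin n) ℝ) (B₁ : Matrix (Fin n) (Fin n) ℝ)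
    (s : ℕ) : Prop :=
  2 ≤ s ∧ B₁.det ≠ 0 ∧
  (∀ i, IsBinaryVec (B₁ i) ∧ IsVertex (Qstar A) (B₁ i)) ∧
  Function.Injective (fun i => B₁ i) ∧
  (∀ i, (rowSupp B₁ i).ncard = s) ∧ (∀ j, {i | B₁ i j ≠ 0}.ncard = s) ∧
  (∀ x, IsBinaryVec x → IsVertex (Qstar A) x → (∀ i, x ≠ B₁ i) → s < (supp x).ncard)

/-- `w^i` for `n = 3ν`: the complement of the characteristic vector of the residue class
`i` mod 3. -/
def wVec (n : ℕ) (i : Fin 3) : Fin n → ℝ :=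
  fun k => if (k : ℕ) % 3 = (i : ℕ) then 0 else 1

/-- `a^i` for `n = 3ν`: the characteristic vector of the residue class `i` mod 3
(`a¹ = (1,0,0,1,0,0,…)` corresponds to `i = 0`). -/
def aVec (n : ℕ) (i : ℕ) : Fin n → ℝ :=
  fun k => if (k : ℕ) % 3 = i then 1 else 0
section Stmt4Aux
open Finset
variable {m n : ℕ}

/-- The generating integer points of `Qstar`. -/
def genSet (A : Matrix (Fin m) (Fin n) ℝ) : Set (Fin n → ℝ) :=
  {x | (∀ j, ∃ k : ℕ, x j = k) ∧ ∀ i, 1 ≤ ∑ j, A i j * x j}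

lemma Qstar_eq_hull (A : Matrix (Fin m) (Fin n) ℝ) : Qstar A = convexHull ℝ (genSet A) := rfl

lemma natValued {x : Fin n → ℝ} (hx : ∀ j, ∃ k : ℕ, x j = k) :
    ∃ g : Fin n → ℕ, ∀ j, x j = g j :=
  ⟨fun j => (hx j).choose, fun j => (hx j).choose_spec⟩

lemma genSet_nonneg {A : Matrix (Fin m) (Fin n) ℝ} {x : Fin n → ℝ} (hx : x ∈ genSet A) :
    ∀ j, 0 ≤ x j := by
  intro j
  obtain ⟨k, hk⟩ := hx.1 j
  rw [hk]; positivity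

/-- Each row support has two elements. -/
lemma rowTwo {A : Matrix (Fin m) (Fin n) ℝ} (h2 : ∀ t, (rowSupp A t).ncard = 2) (t : Fin m) :
    ∃ a b : Fin n, a ≠ b ∧ rowSupp A t = {a, b} :=
  Set.ncard_eq_two.1 (h2 t)

/-- Row sums collapse to two coordinates. -/
lemma rowsum_eq {A : Matrix (Fin m) (Fin n) ℝ} (hA : IsBinaryMatrix A) {t : Fin m}
    {a b : Fin n} (hab : a ≠ b) (hrow : rowSupp A t = {a, b}) (x : Fin n → ℝ) :
    ∑ j, A t j * x j = x a + x b := by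
  have hone : ∀ j, j = a ∨ j = b → A t j = 1 := by
    intro j hj
    have hj' : j ∈ rowSupp A t := by rw [hrow]; rcases hj with rfl | rfl <;> simp
    rcases hA t j with h | h
    · exact absurd h hj'
    · exact h
  have hzero : ∀ j, j ≠ a → j ≠ b → A t j = 0 := by
    intro j hja hjb
    by_contra h
    have : j ∈ rowSupp A t := h
    rw [hrow] at this
    rcases this with h | h
    · exact hja h
    · exact hjb h
  rw [← Finset.sum_subset (Finset.subset_univ ({a, b} : Finset (Fin n)))
    (fun j _ hj => by
      simp only [Finset.mem_insert, Finset.mem_singleton] at hj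
      push_neg at hj
      rw [hzero j hj.1 hj.2, zero_mul])]
  rw [Finset.sum_pair hab, hone a (Or.inl rfl), hone b (Or.inr rfl), one_mul, one_mul]

lemma sum_indicator (c : Fin n → ℝ) (j : Fin n) :
    ∑ l, c l * (if l = j then (1:ℝ) else 0) = c j := by
  simp [mul_ite]

/-- A vertex cannot admit both of these integer perturbation points in `genSet`. -/
lemma vertex_pm {A : Matrix (Fin m) (Fin n) ℝ} {v : Fin n → ℝ}
    (hv : IsVertex (Qstar A) v) {j : Fin n}
    (hminus : (fun l => v l - if l = j then 1 else 0) ∈ genSet A)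
    (hplus : (fun l => v l + if l = j then 1 else 0) ∈ genSet A) : False := by
  have hseg : v ∈ openSegment ℝ (fun l => v l - if l = j then 1 else 0)
      (fun l => v l + if l = j then 1 else 0) := by
    refine ⟨1/2, 1/2, by norm_num, by norm_num, by norm_num, ?_⟩
    funext l
    simp only [Pi.add_apply, Pi.smul_apply, smul_eq_mul]
    ring
  have := (mem_extremePoints.1 hv).2 _ (subset_convexHull ℝ _ hminus) _
    (subset_convexHull ℝ _ hplus) hseg
  have h1 := congrFun this.1 j
  simp at h1

/-- Adding a unit to any coordinate stays in `genSet`. -/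
lemma plus_mem {A : Matrix (Fin m) (Fin n) ℝ} (hA : IsBinaryMatrix A) {v : Fin n → ℝ}
    (hv : v ∈ genSet A) (j : Fin n) :
    (fun l => v l + if l = j then 1 else 0) ∈ genSet A := by
  obtain ⟨g, hg⟩ := natValued hv.1
  constructor
  · intro l
    by_cases hl : l = j
    · exact ⟨g l + 1, by simp only []; rw [if_pos hl, hg l]; push_cast; ring⟩
    · exact ⟨g l, by simp only []; rw [if_neg hl, hg l, add_zero]⟩
  · intro i
    have : ∑ l, A i l * (v l + if l = j then 1 else 0)
        = (∑ l, A i l * v l) + A i j := by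
      rw [← sum_indicator (fun l => A i l) j, ← Finset.sum_add_distrib]
      exact Finset.sum_congr rfl (fun l _ => by ring)
    rw [this]
    have h0 : (0:ℝ) ≤ A i j := by rcases hA i j with h | h <;> rw [h] <;> norm_num
    linarith [hv.2 i]

end Stmt4Aux
section Stmt4Aux2
open Finset
variable {m n : ℕ} {A : Matrix (Fin m) (Fin n) ℝ} {v : Fin n → ℝ}

lemma binEntry_nonneg (hA : IsBinaryMatrix A) (i : Fin m) (l : Fin n) : (0:ℝ) ≤ A i l := by
  rcases hA i l with h | h <;> rw [h] <;> norm_num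

lemma pair_le_rowsum (hA : IsBinaryMatrix A) {x : Fin n → ℝ} (hx : ∀ l, 0 ≤ x l)
    (i : Fin m) {a b : Fin n} (hab : a ≠ b) :
    A i a * x a + A i b * x b ≤ ∑ l, A i l * x l := by
  rw [← Finset.sum_pair (f := fun l => A i l * x l) hab]
  exact Finset.sum_le_sum_of_subset_of_nonneg (Finset.subset_univ _)
    (fun l _ _ => mul_nonneg (binEntry_nonneg hA i l) (hx l))

lemma vertex_genSet (hv : IsVertex (Qstar A) v) : v ∈ genSet A :=
  extremePoints_convexHull_subset hv

lemma vertex_binary (hA : IsBinaryMatrix A) (hv : IsVertex (Qstar A) v) (j : Fin n) :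
    v j = 0 ∨ v j = 1 := by
  obtain ⟨g, hg⟩ := natValued (vertex_genSet hv).1
  by_contra hcon
  push_neg at hcon
  have hg2 : 2 ≤ g j := by
    have h0 : g j ≠ 0 := fun h => hcon.1 (by rw [hg j, h]; norm_num)
    have h1 : g j ≠ 1 := fun h => hcon.2 (by rw [hg j, h]; norm_num)
    omega
  refine vertex_pm hv (j := j) ?_ (plus_mem hA (vertex_genSet hv) j)
  constructor
  · intro l
    by_cases hl : l = j
    · exact ⟨g l - 1, by
        simp only []; rw [if_pos hl, hg l]; subst hl
        push_cast [Nat.cast_sub (by omega : 1 ≤ g l)]; ring⟩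
    · exact ⟨g l, by simp only []; rw [if_neg hl, hg l, sub_zero]⟩
  · intro i
    have hsum : ∑ l, A i l * (v l - if l = j then 1 else 0) = (∑ l, A i l * v l) - A i j := by
      rw [← sum_indicator (fun l => A i l) j, ← Finset.sum_sub_distrib]
      exact Finset.sum_congr rfl (fun l _ => by ring)
    rw [hsum]
    rcases hA i j with h | h
    · rw [h]; simpa using (vertex_genSet hv).2 i
    · have hnn := genSet_nonneg (vertex_genSet hv)
      have hone : A i j * v j ≤ ∑ l, A i l * v l :=
        Finset.single_le_sum (fun l _ => mul_nonneg (binEntry_nonneg hA i l) (hnn l))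
          (Finset.mem_univ j)
      have h2' : (2:ℝ) ≤ v j := by rw [hg j]; exact_mod_cast hg2
      rw [h] at hone ⊢
      linarith

lemma vertex_crit (hA : IsBinaryMatrix A) (hv : IsVertex (Qstar A) v) {j : Fin n}
    (hj : v j ≠ 0) : ∃ t, rowSupp A t ∩ supp v = {j} := by
  obtain ⟨g, hg⟩ := natValued (vertex_genSet hv).1
  by_contra hcon
  push_neg at hcon
  refine vertex_pm hv (j := j) ?_ (plus_mem hA (vertex_genSet hv) j)
  have hg1 : 1 ≤ g j := by
    rcases Nat.eq_zero_or_pos (g j) with h | h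
    · exact absurd (by rw [hg j, h]; norm_num) hj
    · omega
  constructor
  · intro l
    by_cases hl : l = j
    · exact ⟨g l - 1, by
        simp only []; rw [if_pos hl, hg l]; subst hl
        push_cast [Nat.cast_sub hg1]; ring⟩
    · exact ⟨g l, by simp only []; rw [if_neg hl, hg l, sub_zero]⟩
  · intro i
    have hsum : ∑ l, A i l * (v l - if l = j then 1 else 0) = (∑ l, A i l * v l) - A i j := by
      rw [← sum_indicator (fun l => A i l) j, ← Finset.sum_sub_distrib]
      exact Finset.sum_congr rfl (fun l _ => by ring)
    rw [hsum]
    rcases hA i j with h | h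
    · rw [h]; simpa using (vertex_genSet hv).2 i
    · have hjmem : j ∈ rowSupp A i ∩ supp v := ⟨by rw [rowSupp, Set.mem_setOf_eq, h]; norm_num, hj⟩
      obtain ⟨l, hl, hlj⟩ : ∃ l, l ∈ rowSupp A i ∩ supp v ∧ l ≠ j := by
        by_contra hno
        push_neg at hno
        exact hcon i (Set.eq_singleton_iff_unique_mem.2 ⟨hjmem, fun l hl => hno l hl⟩)
      have hAl : A i l = 1 := by
        rcases hA i l with h' | h'
        · exact absurd h' hl.1
        · exact h'
      have hvl : (1:ℝ) ≤ v l := by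
        rw [hg l]
        have hne0 : g l ≠ 0 := fun hh => hl.2 (by rw [hg l, hh]; norm_num)
        exact_mod_cast Nat.one_le_iff_ne_zero.2 hne0
      have hvj : (1:ℝ) ≤ v j := by rw [hg j]; exact_mod_cast hg1
      have hpair := pair_le_rowsum hA (genSet_nonneg (vertex_genSet hv)) i (Ne.symm hlj)
      rw [h, hAl] at hpair
      rw [h]
      linarith

/-- Criticality, packaged: a critical row for `j` consists of `j` and a node outside `supp v`. -/
lemma vertex_crit' (hA : IsBinaryMatrix A) (h2 : ∀ t, (rowSupp A t).ncard = 2)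
    (hv : IsVertex (Qstar A) v) {j : Fin n} (hj : v j ≠ 0) :
    ∃ t b, b ≠ j ∧ rowSupp A t = {j, b} ∧ v b = 0 := by
  obtain ⟨t, ht⟩ := vertex_crit hA hv hj
  obtain ⟨a, b, hab, hrow⟩ := rowTwo h2 t
  have hjrow : j ∈ rowSupp A t := by
    have hjm : j ∈ rowSupp A t ∩ supp v := by rw [ht]; exact rfl
    exact hjm.1
  have hout : ∀ c, c ∈ rowSupp A t → c ≠ j → v c = 0 := by
    intro c hc hcj
    by_contra hvc
    exact hcj (by have : c ∈ rowSupp A t ∩ supp v := ⟨hc, hvc⟩; rwa [ht] at this)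
  rw [hrow] at hjrow
  rcases hjrow with rfl | rfl
  · exact ⟨t, b, hab.symm, hrow,
      hout b (by rw [hrow]; exact Or.inr rfl) hab.symm⟩
  · exact ⟨t, a, hab, by rw [hrow, Set.pair_comm],
      hout a (by rw [hrow]; exact Or.inl rfl) hab⟩

end Stmt4Aux2
section Stmt4Graph
open Finset
open Classical
variable {m n : ℕ} {A : Matrix (Fin m) (Fin n) ℝ} {v v' : Fin n → ℝ}

lemma JSG_comm (A : Matrix (Fin m) (Fin n) ℝ) (v v' : Fin n → ℝ) : JSG A v v' = JSG A v' v := by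
  ext p q
  show p ≠ q ∧ (jsgEdge A v v' p q ∨ jsgEdge A v v' q p) ↔
    p ≠ q ∧ (jsgEdge A v' v p q ∨ jsgEdge A v' v q p)
  have h : ∀ a b : Fin n, jsgEdge A v v' a b ↔ jsgEdge A v' v b a := by
    intro a b
    constructor <;> rintro ⟨t, h1, h2⟩ <;> exact ⟨t, h2, h1⟩
  simp only [h]
  tauto

lemma node_ne {p : Fin n} (hp : p ∈ jsgNodes v v') : v p ≠ v' p := by
  rcases hp with ⟨h1, h2⟩ | ⟨h1, h2⟩
  · rw [not_not.1 fun h => h2 h]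
    exact h1
  · rw [not_not.1 fun h => h2 h]
    exact Ne.symm h1

lemma swap_mem (hA : IsBinaryMatrix A) (h2 : ∀ t, (rowSupp A t).ncard = 2)
    (hvS : v ∈ genSet A) (hv'S : v' ∈ genSet A) (p : Fin n) :
    (fun j => if (JSG A v v').Reachable p j then v' j else v j) ∈ genSet A := by
  constructor
  · intro j
    by_cases h : (JSG A v v').Reachable p j
    · obtain ⟨k, hk⟩ := hv'S.1 j
      exact ⟨k, by simp only []; rw [if_pos h]; exact hk⟩
    · obtain ⟨k, hk⟩ := hvS.1 j
      exact ⟨k, by simp only []; rw [if_neg h]; exact hk⟩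
  · intro i
    obtain ⟨a, b, hab, hrow⟩ := rowTwo h2 i
    rw [rowsum_eq hA hab hrow]
    have hva := hvS.2 i
    have hvb := hv'S.2 i
    rw [rowsum_eq hA hab hrow] at hva hvb
    by_cases hra : (JSG A v v').Reachable p a <;> by_cases hrb : (JSG A v v').Reachable p b
    · rw [if_pos hra, if_pos hrb]; exact hvb
    · rw [if_pos hra, if_neg hrb]
      by_contra hlt
      push_neg at hlt
      obtain ⟨ka, hka⟩ := hv'S.1 a
      obtain ⟨kb, hkb⟩ := hvS.1 b
      have hnat : ka = 0 ∧ kb = 0 := by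
        have hc : ((ka + kb : ℕ) : ℝ) < 1 := by push_cast; rw [← hka, ← hkb]; exact hlt
        have := Nat.lt_one_iff.1 (by exact_mod_cast hc)
        omega
      have h0a : v' a = 0 := by rw [hka, hnat.1]; norm_num
      have h0b : v b = 0 := by rw [hkb, hnat.2]; norm_num
      have hvan : v a ≠ 0 := by intro h; rw [h, h0b] at hva; norm_num at hva
      have hv'bn : v' b ≠ 0 := by intro h; rw [h, h0a] at hvb; norm_num at hvb
      have edge : (JSG A v v').Adj a b := by
        refine ⟨hab, Or.inl ⟨i, ?_, ?_⟩⟩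
        · apply Set.eq_singleton_iff_unique_mem.2
          refine ⟨⟨by rw [hrow]; exact Or.inl rfl, hvan⟩, ?_⟩
          rintro x ⟨hx1, hx2⟩
          rw [hrow] at hx1
          rcases hx1 with rfl | rfl
          · rfl
          · exact absurd h0b hx2
        · apply Set.eq_singleton_iff_unique_mem.2
          refine ⟨⟨by rw [hrow]; exact Or.inr rfl, hv'bn⟩, ?_⟩
          rintro x ⟨hx1, hx2⟩
          rw [hrow] at hx1
          rcases hx1 with rfl | rfl
          · exact absurd h0a hx2
          · rfl
      exact hrb (hra.trans edge.reachable)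
    · rw [if_neg hra, if_pos hrb]
      by_contra hlt
      push_neg at hlt
      obtain ⟨ka, hka⟩ := hvS.1 a
      obtain ⟨kb, hkb⟩ := hv'S.1 b
      have hnat : ka = 0 ∧ kb = 0 := by
        have hc : ((ka + kb : ℕ) : ℝ) < 1 := by push_cast; rw [← hka, ← hkb]; exact hlt
        have := Nat.lt_one_iff.1 (by exact_mod_cast hc)
        omega
      have h0a : v a = 0 := by rw [hka, hnat.1]; norm_num
      have h0b : v' b = 0 := by rw [hkb, hnat.2]; norm_num
      have hvbn : v b ≠ 0 := by intro h; rw [h, h0a] at hva; norm_num at hva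
      have hv'an : v' a ≠ 0 := by intro h; rw [h, h0b] at hvb; norm_num at hvb
      have edge : (JSG A v v').Adj b a := by
        refine ⟨hab.symm, Or.inl ⟨i, ?_, ?_⟩⟩
        · apply Set.eq_singleton_iff_unique_mem.2
          refine ⟨⟨by rw [hrow]; exact Or.inr rfl, hvbn⟩, ?_⟩
          rintro x ⟨hx1, hx2⟩
          rw [hrow] at hx1
          rcases hx1 with rfl | rfl
          · exact absurd h0a hx2
          · rfl
        · apply Set.eq_singleton_iff_unique_mem.2
          refine ⟨⟨by rw [hrow]; exact Or.inl rfl, hv'an⟩, ?_⟩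
          rintro x ⟨hx1, hx2⟩
          rw [hrow] at hx1
          rcases hx1 with rfl | rfl
          · rfl
          · exact absurd h0b hx2
      exact hra (hrb.trans edge.reachable)
    · rw [if_neg hra, if_neg hrb]; exact hva

lemma dir_fwd (hA : IsBinaryMatrix A) (h2 : ∀ t, (rowSupp A t).ncard = 2)
    (hv : IsVertex (Qstar A) v) (hv' : IsVertex (Qstar A) v')
    (hadj : AdjacentVerts (Qstar A) v v') : JSGConnected A v v' := by
  intro p hp q hq
  by_contra hpq
  have hvS := vertex_genSet hv
  have hv'S := vertex_genSet hv'
  set u : Fin n → ℝ := fun j => if (JSG A v v').Reachable p j then v' j else v j with hu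
  set u' : Fin n → ℝ := fun j => if (JSG A v v').Reachable p j then v j else v' j with hu'
  have huS : u ∈ genSet A := swap_mem hA h2 hvS hv'S p
  have hu'S : u' ∈ genSet A := by
    have h := swap_mem hA h2 hv'S hvS p
    rw [← JSG_comm A v v'] at h
    exact h
  have hmid : (1/2:ℝ) • v + (1/2:ℝ) • v' ∈ segment ℝ v v' :=
    ⟨1/2, 1/2, by norm_num, by norm_num, by norm_num, rfl⟩
  have hopen : (1/2:ℝ) • v + (1/2:ℝ) • v' ∈ openSegment ℝ u u' := by
    refine ⟨1/2, 1/2, by norm_num, by norm_num, by norm_num, ?_⟩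
    funext j
    simp only [hu, hu', Pi.add_apply, Pi.smul_apply, smul_eq_mul]
    by_cases h : (JSG A v v').Reachable p j
    · rw [if_pos h, if_pos h]; ring
    · rw [if_neg h, if_neg h]
  have hus := hadj.2.2.2.2 (subset_convexHull ℝ _ huS)
    (subset_convexHull ℝ _ hu'S) hmid hopen
  obtain ⟨a, b, ha, hb, hab, habu⟩ := hus
  have hpp := congrFun habu p
  have hqq := congrFun habu q
  simp only [hu, Pi.add_apply, Pi.smul_apply, smul_eq_mul] at hpp hqq
  rw [if_pos (SimpleGraph.Reachable.refl p)] at hpp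
  rw [if_neg hpq] at hqq
  have ha0 : a = 0 := by
    have hz : a * (v p - v' p) = 0 := by linear_combination hpp - v' p * hab
    rcases mul_eq_zero.1 hz with h | h
    · exact h
    · exact absurd (sub_eq_zero.1 h) (node_ne hp)
  have hb0 : b = 0 := by
    have hz : b * (v' q - v q) = 0 := by linear_combination hqq - v q * hab
    rcases mul_eq_zero.1 hz with h | h
    · exact h
    · exact absurd (sub_eq_zero.1 h).symm (node_ne hq)
  rw [ha0, hb0] at hab
  norm_num at hab

end Stmt4Graph
section HullFace
variable {E : Type*} [AddCommGroup E] [Module ℝ E]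
variable {S : Set E} {f : E →ₗ[ℝ] ℝ} {γ : ℝ}

lemma hull_halfspace (hval : ∀ w ∈ S, γ ≤ f w) :
    ∀ x ∈ convexHull ℝ S, γ ≤ f x := fun x hx =>
  convexHull_min hval (convex_halfSpace_ge (LinearMap.isLinear f) γ) hx

lemma face_isExtreme (hval : ∀ w ∈ S, γ ≤ f w) :
    IsExtreme ℝ (convexHull ℝ S) {x ∈ convexHull ℝ S | f x = γ} := by
  constructor
  · exact Set.sep_subset _ _
  rintro x1 hx1 x2 hx2 x ⟨hxH, hxf⟩ hseg
  obtain ⟨a, b, ha, hb, hab, rfl⟩ := hseg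
  have h1 := hull_halfspace hval x1 hx1
  have h2 := hull_halfspace hval x2 hx2
  have hfx : a * f x1 + b * f x2 = γ := by
    simpa using hxf
  have hf1 : f x1 = γ := by
    by_contra h
    have h1' : γ < f x1 := lt_of_le_of_ne h1 (Ne.symm h)
    have key : a * γ + b * γ = γ := by rw [← add_mul, hab, one_mul]
    nlinarith [mul_le_mul_of_nonneg_left h2 hb.le, mul_lt_mul_of_pos_left h1' ha]
  have hf2 : f x2 = γ := by
    by_contra h
    have h2' : γ < f x2 := lt_of_le_of_ne h2 (Ne.symm h)
    have key : a * γ + b * γ = γ := by rw [← add_mul, hab, one_mul]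
    nlinarith [mul_lt_mul_of_pos_left h2' hb]
  exact ⟨hx1, hf1⟩

lemma hull_slice (hval : ∀ w ∈ S, γ ≤ f w) :
    {x ∈ convexHull ℝ S | f x = γ} = convexHull ℝ (S ∩ {x | f x = γ}) := by
  apply Set.Subset.antisymm
  · rintro x ⟨hxH, hxf⟩
    rw [_root_.convexHull_eq] at hxH
    obtain ⟨ι, t, w, z, hw0, hw1, hz, rfl⟩ := hxH
    have hcm : t.centerMass w z = ∑ i ∈ t, w i • z i := t.centerMass_eq_of_sum_1 z hw1
    have hfz : ∀ i ∈ t, w i ≠ 0 → f (z i) = γ := by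
      intro i hi hwi
      have hsum : ∑ i ∈ t, w i * (f (z i) - γ) = 0 := by
        have : f (t.centerMass w z) = ∑ i ∈ t, w i * f (z i) := by
          rw [hcm, map_sum]; simp [map_smul]
        have h2 : ∑ i ∈ t, w i * f (z i) = γ := by rw [← this, hxf]
        calc ∑ i ∈ t, w i * (f (z i) - γ) = (∑ i ∈ t, w i * f (z i)) - (∑ i ∈ t, w i) * γ := by
              rw [Finset.sum_mul, ← Finset.sum_sub_distrib]
              exact Finset.sum_congr rfl (fun i _ => by ring)
          _ = 0 := by rw [h2, hw1]; ring
      have := (Finset.sum_eq_zero_iff_of_nonneg (fun i hi =>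
        mul_nonneg (hw0 i hi) (sub_nonneg.2 (hval _ (hz i hi))))).1 hsum i hi
      rcases mul_eq_zero.1 this with h | h
      · exact absurd h hwi
      · linarith [sub_eq_zero.1 h]
    rw [← Finset.centerMass_filter_ne_zero z]
    apply Finset.centerMass_mem_convexHull
    · intro i hi; exact hw0 i (Finset.mem_filter.1 hi).1
    · rw [Finset.sum_filter_ne_zero]; rw [hw1]; exact one_pos
    · intro i hi
      obtain ⟨hit, hwi⟩ := Finset.mem_filter.1 hi
      exact ⟨hz i hit, hfz i hit hwi⟩
  · intro x hx
    have h1 : x ∈ convexHull ℝ S := convexHull_mono Set.inter_subset_left hx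
    have h2 : f x = γ := by
      have : convexHull ℝ (S ∩ {x | f x = γ}) ⊆ {x | f x = γ} :=
        convexHull_min Set.inter_subset_right (by
          intro a ha b hb p q hp hq hpq
          simp only [Set.mem_setOf_eq] at ha hb ⊢
          simp [ha, hb, ← add_mul, hpq])
      exact this hx
    exact ⟨h1, h2⟩

lemma segment_isExtreme_of_functional {v v' : E} (hval : ∀ w ∈ S, γ ≤ f w)
    (heq : S ∩ {x | f x = γ} = {v, v'}) :
    IsExtreme ℝ (convexHull ℝ S) (segment ℝ v v') := by
  have h2 := hull_slice hval
  rw [heq, convexHull_pair] at h2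
  rw [← h2]
  exact face_isExtreme hval

end HullFace

/-- The dot-product linear functional. -/
def dotL {n : ℕ} (c : Fin n → ℝ) : (Fin n → ℝ) →ₗ[ℝ] ℝ where
  toFun x := ∑ j, c j * x j
  map_add' x y := by
    simp only [Pi.add_apply]
    rw [← Finset.sum_add_distrib]
    exact Finset.sum_congr rfl fun j _ => by ring
  map_smul' r x := by
    simp only [Pi.smul_apply, smul_eq_mul, RingHom.id_apply]
    rw [Finset.mul_sum]
    exact Finset.sum_congr rfl fun j _ => by ring

lemma dotL_apply {n : ℕ} (c x : Fin n → ℝ) : dotL c x = ∑ j, c j * x j := rfl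
section Stmt4Main
open Finset
open Classical

lemma dir_bwd {m n : ℕ} {A : Matrix (Fin m) (Fin n) ℝ} {v v' : Fin n → ℝ}
    (hA : IsBinaryMatrix A) (hrows : ∀ t, (rowSupp A t).ncard = 2)
    (hne : v ≠ v') (hv : IsVertex (Qstar A) v) (hv' : IsVertex (Qstar A) v')
    (hcon : JSGConnected A v v') : IsExtreme ℝ (Qstar A) (segment ℝ v v') := by
  classical
  have hvS := vertex_genSet hv
  have hv'S := vertex_genSet hv'
  have binv := vertex_binary hA hv
  have binv' := vertex_binary hA hv'
  set T : Finset (Fin m) :=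
    univ.filter (fun t => (∑ j, A t j * v j) = 1 ∧ (∑ j, A t j * v' j) = 1) with hT
  set Iset : Finset (Fin n) := univ.filter (fun j => v j ≠ 0 ∧ v' j ≠ 0) with hI
  set Z : Finset (Fin n) := univ.filter (fun j => v j = 0 ∧ v' j = 0) with hZ
  set K : ℝ := (Iset.card : ℝ) + 1 with hK
  set c : Fin n → ℝ := fun j =>
    K * ((∑ t ∈ T, A t j) + (if j ∈ Z then 1 else 0)) + (if j ∈ Iset then 1 else 0) with hc
  set γ : ℝ := K * T.card + Iset.card with hγ
  have KPos : (0:ℝ) < K := by rw [hK]; positivity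
  have expand : ∀ x : Fin n → ℝ, dotL c x =
      K * ((∑ t ∈ T, ∑ j, A t j * x j) + ∑ j ∈ Z, x j) + ∑ j ∈ Iset, x j := by
    intro x
    rw [dotL_apply]
    calc ∑ j, c j * x j
        = ∑ j, ((K * ((∑ t ∈ T, A t j) * x j)) + (K * (if j ∈ Z then x j else 0)
            + (if j ∈ Iset then x j else 0))) := by
          refine Finset.sum_congr rfl fun j _ => ?_
          rw [hc]
          by_cases h1 : j ∈ Z <;> by_cases h2' : j ∈ Iset <;>
            simp only [h1, h2', if_true, if_false] <;> ring
      _ = K * (∑ j, (∑ t ∈ T, A t j) * x j)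
            + (K * (∑ j, if j ∈ Z then x j else 0) + ∑ j, if j ∈ Iset then x j else 0) := by
          rw [Finset.sum_add_distrib, Finset.sum_add_distrib, ← Finset.mul_sum, ← Finset.mul_sum]
      _ = K * ((∑ t ∈ T, ∑ j, A t j * x j) + ∑ j ∈ Z, x j) + ∑ j ∈ Iset, x j := by
          rw [Finset.sum_ite_mem, Finset.sum_ite_mem, Finset.univ_inter, Finset.univ_inter]
          have e1 : ∑ j, (∑ t ∈ T, A t j) * x j = ∑ t ∈ T, ∑ j, A t j * x j := by
            rw [Finset.sum_congr rfl fun j (_ : j ∈ univ) => Finset.sum_mul T (fun t => A t j) (x j)]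
            exact Finset.sum_comm
          rw [e1]
          ring
  have vI : ∀ j ∈ Iset, v j = 1 := by
    intro j hj
    have h := (Finset.mem_filter.1 hj).2.1
    rcases binv j with hb | hb
    · exact absurd hb h
    · exact hb
  have v'I : ∀ j ∈ Iset, v' j = 1 := by
    intro j hj
    have h := (Finset.mem_filter.1 hj).2.2
    rcases binv' j with hb | hb
    · exact absurd hb h
    · exact hb
  have fv : dotL c v = γ := by
    rw [expand v]
    have e1 : ∑ t ∈ T, ∑ j, A t j * v j = (T.card : ℝ) := by
      rw [Finset.sum_congr rfl (fun t ht => (Finset.mem_filter.1 ht).2.1)]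
      simp
    have e2 : ∑ j ∈ Z, v j = 0 :=
      Finset.sum_eq_zero fun j hj => (Finset.mem_filter.1 hj).2.1
    have e3 : ∑ j ∈ Iset, v j = (Iset.card : ℝ) := by
      rw [Finset.sum_congr rfl vI]
      simp
    rw [e1, e2, e3, hγ]
    ring
  have fv' : dotL c v' = γ := by
    rw [expand v']
    have e1 : ∑ t ∈ T, ∑ j, A t j * v' j = (T.card : ℝ) := by
      rw [Finset.sum_congr rfl (fun t ht => (Finset.mem_filter.1 ht).2.2)]
      simp
    have e2 : ∑ j ∈ Z, v' j = 0 :=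
      Finset.sum_eq_zero fun j hj => (Finset.mem_filter.1 hj).2.2
    have e3 : ∑ j ∈ Iset, v' j = (Iset.card : ℝ) := by
      rw [Finset.sum_congr rfl v'I]
      simp
    rw [e1, e2, e3, hγ]
    ring
  -- the main valuation claim
  have main : ∀ w ∈ genSet A, γ ≤ dotL c w ∧ (dotL c w = γ → w = v ∨ w = v') := by
    intro w hw
    obtain ⟨gw, hgw⟩ := natValued hw.1
    have wnn := genSet_nonneg hw
    have rowNat : ∀ i : Fin m, ∃ kr : ℕ, (∑ j, A i j * w j) = (kr : ℝ) ∧ 1 ≤ kr := by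
      intro i
      obtain ⟨a, b, hab, hrow⟩ := rowTwo hrows i
      refine ⟨gw a + gw b, ?_, ?_⟩
      · rw [rowsum_eq hA hab hrow, hgw a, hgw b]
        push_cast
        ring
      · have h1 := hw.2 i
        rw [rowsum_eq hA hab hrow, hgw a, hgw b] at h1
        exact_mod_cast h1
    have B1 : (T.card : ℝ) ≤ ∑ t ∈ T, ∑ j, A t j * w j := by
      calc (T.card : ℝ) = ∑ _t ∈ T, (1:ℝ) := by simp
        _ ≤ _ := Finset.sum_le_sum fun t _ => hw.2 t
    have B2 : (0:ℝ) ≤ ∑ j ∈ Z, w j := Finset.sum_nonneg fun j _ => wnn j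
    have B3 : (0:ℝ) ≤ ∑ j ∈ Iset, w j := Finset.sum_nonneg fun j _ => wnn j
    by_cases hSF : (∀ t ∈ T, ∑ j, A t j * w j = 1) ∧ (∀ j ∈ Z, w j = 0)
    case neg =>
      have hstep : (T.card : ℝ) + 1 ≤ (∑ t ∈ T, ∑ j, A t j * w j) + ∑ j ∈ Z, w j := by
        rw [not_and_or] at hSF
        rcases hSF with h | h
        · push_neg at h
          obtain ⟨t0, ht0, hne0⟩ := h
          have h2sum : (2:ℝ) ≤ ∑ j, A t0 j * w j := by
            obtain ⟨kr, hkr, hkr1⟩ := rowNat t0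
            have hkrne : kr ≠ 1 := fun hh => hne0 (by rw [hkr, hh]; norm_num)
            rw [hkr]
            exact_mod_cast (by omega : 2 ≤ kr)
          have hsum2 : (T.card : ℝ) + 1 ≤ ∑ t ∈ T, ∑ j, A t j * w j := by
            have l1 : ∑ t ∈ T, (if t = t0 then (2:ℝ) else 1) = (T.card : ℝ) + 1 := by
              have step : ∀ t ∈ T, (if t = t0 then (2:ℝ) else 1)
                  = (if t = t0 then (1:ℝ) else 0) + 1 := fun t _ => by split_ifs <;> norm_num
              rw [Finset.sum_congr rfl step, Finset.sum_add_distrib,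
                Finset.sum_ite_eq' T t0 (fun _ => (1:ℝ)), if_pos ht0]
              simp [add_comm]
            rw [← l1]
            refine Finset.sum_le_sum fun t ht => ?_
            by_cases hh : t = t0
            · rw [if_pos hh, hh]
              exact h2sum
            · rw [if_neg hh]
              exact hw.2 t
          linarith
        · push_neg at h
          obtain ⟨j0, hj0, hne0⟩ := h
          have h1w : (1:ℝ) ≤ w j0 := by
            rw [hgw j0] at hne0 ⊢
            have hg0 : gw j0 ≠ 0 := fun hh => hne0 (by rw [hh]; norm_num)
            exact_mod_cast Nat.one_le_iff_ne_zero.2 hg0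
          have hz1 : (1:ℝ) ≤ ∑ j ∈ Z, w j :=
            le_trans h1w (Finset.single_le_sum (fun j _ => wnn j) hj0)
          linarith
      have hbig : γ + 1 ≤ dotL c w := by
        rw [expand w, hγ]
        nlinarith [hstep, B3, KPos, mul_le_mul_of_nonneg_left hstep KPos.le]
      exact ⟨by linarith, fun heq => absurd heq (by linarith)⟩
    case pos =>
      have hTsum : ∑ t ∈ T, ∑ j, A t j * w j = (T.card : ℝ) := by
        rw [Finset.sum_congr rfl hSF.1]
        simp
      have hZsum : ∑ j ∈ Z, w j = 0 := Finset.sum_eq_zero hSF.2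
      -- the core edge fact
      have ecore : ∀ p q : Fin n, p ≠ q → jsgEdge A v v' p q →
          (v p = 1 ∧ v q = 0 ∧ v' p = 0 ∧ v' q = 1 ∧ w p + w q = 1) := by
        rintro p q hpq ⟨t, he1, he2⟩
        obtain ⟨a, b, hab, hrow⟩ := rowTwo hrows t
        have hpv : p ∈ rowSupp A t ∩ supp v := by rw [he1]; rfl
        have hqv' : q ∈ rowSupp A t ∩ supp v' := by rw [he2]; rfl
        have hpmem : p ∈ rowSupp A t := hpv.1
        have hqmem : q ∈ rowSupp A t := hqv'.1
        have hvq : v q = 0 := by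
          by_contra hh
          have hmem : q ∈ rowSupp A t ∩ supp v := ⟨hqmem, hh⟩
          rw [he1] at hmem
          exact hpq hmem.symm
        have hv'p : v' p = 0 := by
          by_contra hh
          have hmem : p ∈ rowSupp A t ∩ supp v' := ⟨hpmem, hh⟩
          rw [he2] at hmem
          exact hpq hmem
        have hvp1 : v p = 1 := by
          rcases binv p with hb | hb
          · exact absurd hb hpv.2
          · exact hb
        have hv'q1 : v' q = 1 := by
          rcases binv' q with hb | hb
          · exact absurd hb hqv'.2
          · exact hb
        have hrow' : rowSupp A t = {p, q} := by
          rw [hrow] at hpmem hqmem ⊢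
          rcases hpmem with hpa | hpb <;> rcases hqmem with hqa | hqb
          · exact absurd (hpa.trans hqa.symm) hpq
          · rw [← hpa, ← hqb]
          · rw [← hpb, ← hqa, Set.pair_comm]
          · exact absurd (hpb.trans hqb.symm) hpq
        have hsum := rowsum_eq hA hpq hrow'
        have htT : t ∈ T := by
          refine Finset.mem_filter.2 ⟨Finset.mem_univ t, ?_, ?_⟩
          · rw [hsum v, hvp1, hvq]
            norm_num
          · rw [hsum v', hv'p, hv'q1]
            norm_num
        have hwsum : w p + w q = 1 := by
          rw [← hsum w]
          exact hSF.1 t htT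
        exact ⟨hvp1, hvq, hv'p, hv'q1, hwsum⟩
      have edgeT : ∀ p q : Fin n, (JSG A v v').Adj p q →
          (v p = 1 ∧ v q = 0 ∧ v' p = 0 ∧ v' q = 1 ∧ w p + w q = 1) ∨
          (v q = 1 ∧ v p = 0 ∧ v' q = 0 ∧ v' p = 1 ∧ w p + w q = 1) := by
        rintro p q ⟨hpq, he | he⟩
        · exact Or.inl (ecore p q hpq he)
        · obtain ⟨a1, a2, a3, a4, a5⟩ := ecore q p (Ne.symm hpq) he
          exact Or.inr ⟨a1, a2, a3, a4, by linarith⟩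
      have natsum : ∀ p q : Fin n, w p + w q = 1 → gw p + gw q = 1 := by
        intro p q h5
        have hc' : ((gw p + gw q : ℕ) : ℝ) = 1 := by
          push_cast
          rw [← hgw p, ← hgw q]
          exact h5
        exact_mod_cast hc'
      have keyv : ∀ p q, (JSG A v v').Adj p q → (w p = v p ↔ w q = v q) := by
        intro p q hadj
        rcases edgeT p q hadj with ⟨h1, hq0, _, _, h5⟩ | ⟨h1, hq0, _, _, h5⟩ <;>
          have hn := natsum p q h5
        · rw [h1, hq0, hgw p, hgw q]
          constructor
          · intro hh
            have e1 : gw p = 1 := by exact_mod_cast hh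
            have e2 : gw q = 0 := by omega
            exact_mod_cast e2
          · intro hh
            have e1 : gw q = 0 := by exact_mod_cast hh
            have e2 : gw p = 1 := by omega
            exact_mod_cast e2
        · rw [h1, hq0, hgw p, hgw q]
          constructor
          · intro hh
            have e1 : gw p = 0 := by exact_mod_cast hh
            have e2 : gw q = 1 := by omega
            exact_mod_cast e2
          · intro hh
            have e1 : gw q = 1 := by exact_mod_cast hh
            have e2 : gw p = 0 := by omega
            exact_mod_cast e2
      have keyv' : ∀ p q, (JSG A v v').Adj p q → (w p = v' p ↔ w q = v' q) := by
        intro p q hadj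
        rcases edgeT p q hadj with ⟨_, _, h3, h4, h5⟩ | ⟨_, _, h3, h4, h5⟩ <;>
          have hn := natsum p q h5
        · rw [h3, h4, hgw p, hgw q]
          constructor
          · intro hh
            have e1 : gw p = 0 := by exact_mod_cast hh
            have e2 : gw q = 1 := by omega
            exact_mod_cast e2
          · intro hh
            have e1 : gw q = 1 := by exact_mod_cast hh
            have e2 : gw p = 0 := by omega
            exact_mod_cast e2
        · rw [h3, h4, hgw p, hgw q]
          constructor
          · intro hh
            have e1 : gw p = 1 := by exact_mod_cast hh
            have e2 : gw q = 0 := by omega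
            exact_mod_cast e2
          · intro hh
            have e1 : gw q = 0 := by exact_mod_cast hh
            have e2 : gw p = 1 := by omega
            exact_mod_cast e2
      have keyalt : ∀ p q, (JSG A v v').Adj p q → w p ≠ v p → w p = v' p := by
        intro p q hadj hne'
        rcases edgeT p q hadj with ⟨h1, _, h3, _, h5⟩ | ⟨_, h2', _, h4, h5⟩ <;>
          have hn := natsum p q h5
        · rw [h3, hgw p]
          rw [h1, hgw p] at hne'
          have e1 : gw p ≠ 1 := fun hh => hne' (by rw [hh]; norm_num)
          have e2 : gw p = 0 := by omega
          exact_mod_cast e2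
        · rw [h4, hgw p]
          rw [h2', hgw p] at hne'
          have e1 : gw p ≠ 0 := fun hh => hne' (by rw [hh]; norm_num)
          have e2 : gw p = 1 := by omega
          exact_mod_cast e2
      have walkprop : ∀ p q : Fin n, (JSG A v v').Reachable p q →
          ((w p = v p ↔ w q = v q) ∧ (w p = v' p ↔ w q = v' q)) := by
        intro p q hr
        obtain ⟨W⟩ := hr
        induction W with
        | nil => exact ⟨Iff.rfl, Iff.rfl⟩
        | cons h W ih => exact ⟨(keyv _ _ h).trans ih.1, (keyv' _ _ h).trans ih.2⟩
      have nbr : ∀ p, p ∈ jsgNodes v v' → ∃ q, (JSG A v v').Adj p q := by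
        intro p hp
        rcases hp with ⟨h1', h2'⟩ | ⟨h1', h2'⟩
        · obtain ⟨t, b, hbp, hrow, hvb⟩ := vertex_crit' hA hrows hv h1'
          have hv'p : v' p = 0 := not_not.1 h2'
          have hcov := hv'S.2 t
          rw [rowsum_eq hA (Ne.symm hbp) hrow] at hcov
          have hv'b : v' b ≠ 0 := by
            intro hh
            rw [hv'p, hh] at hcov
            norm_num at hcov
          refine ⟨b, Ne.symm hbp, Or.inl ⟨t, ?_, ?_⟩⟩
          · apply Set.eq_singleton_iff_unique_mem.2
            refine ⟨⟨by rw [hrow]; exact Or.inl rfl, h1'⟩, ?_⟩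
            rintro x ⟨hx1, hx2⟩
            rw [hrow] at hx1
            rcases hx1 with rfl | rfl
            · rfl
            · exact absurd hvb hx2
          · apply Set.eq_singleton_iff_unique_mem.2
            refine ⟨⟨by rw [hrow]; exact Or.inr rfl, hv'b⟩, ?_⟩
            rintro x ⟨hx1, hx2⟩
            rw [hrow] at hx1
            rcases hx1 with rfl | rfl
            · exact absurd hv'p hx2
            · rfl
        · obtain ⟨t, b, hbp, hrow, hv'b⟩ := vertex_crit' hA hrows hv' h1'
          have hvp : v p = 0 := not_not.1 h2'
          have hcov := hvS.2 t
          rw [rowsum_eq hA (Ne.symm hbp) hrow] at hcov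
          have hvb : v b ≠ 0 := by
            intro hh
            rw [hvp, hh] at hcov
            norm_num at hcov
          refine ⟨b, Ne.symm hbp, Or.inr ⟨t, ?_, ?_⟩⟩
          · apply Set.eq_singleton_iff_unique_mem.2
            refine ⟨⟨by rw [hrow]; exact Or.inr rfl, hvb⟩, ?_⟩
            rintro x ⟨hx1, hx2⟩
            rw [hrow] at hx1
            rcases hx1 with rfl | rfl
            · exact absurd hvp hx2
            · rfl
          · apply Set.eq_singleton_iff_unique_mem.2
            refine ⟨⟨by rw [hrow]; exact Or.inl rfl, h1'⟩, ?_⟩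
            rintro x ⟨hx1, hx2⟩
            rw [hrow] at hx1
            rcases hx1 with rfl | rfl
            · rfl
            · exact absurd hv'b hx2
      have hpn : ∃ p0, p0 ∈ jsgNodes v v' := by
        by_contra hh
        push_neg at hh
        apply hne
        funext j
        rcases binv j with h | h <;> rcases binv' j with h' | h'
        · rw [h, h']
        · exact absurd (Or.inr ⟨(show v' j ≠ 0 by rw [h']; norm_num), fun hx => hx h⟩) (hh j)
        · exact absurd (Or.inl ⟨(show v j ≠ 0 by rw [h]; norm_num), fun hx => hx h'⟩) (hh j)
        · rw [h, h']
      obtain ⟨p0, hp0⟩ := hpn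
      have dichot : (∀ j ∈ jsgNodes v v', w j = v j) ∨ (∀ j ∈ jsgNodes v v', w j = v' j) := by
        by_cases hw0 : w p0 = v p0
        · exact Or.inl fun j hj => (walkprop p0 j (hcon p0 hp0 j hj)).1.mp hw0
        · obtain ⟨q0, hq0⟩ := nbr p0 hp0
          have hw0' : w p0 = v' p0 := keyalt p0 q0 hq0 hw0
          exact Or.inr fun j hj => (walkprop p0 j (hcon p0 hp0 j hj)).2.mp hw0'
      have hIone : ∀ j ∈ Iset, (1:ℝ) ≤ w j := by
        intro j hj
        obtain ⟨hvj, hv'j⟩ := (Finset.mem_filter.1 hj).2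
        rcases dichot with hd | hd
        · obtain ⟨t, b, hbj, hrow, hvb⟩ := vertex_crit' hA hrows hv hvj
          have hwb : w b = 0 := by
            by_cases hbv' : v' b = 0
            · exact hSF.2 b (Finset.mem_filter.2 ⟨Finset.mem_univ b, hvb, hbv'⟩)
            · have hbN : b ∈ jsgNodes v v' := Or.inr ⟨hbv', fun hx => hx hvb⟩
              rw [hd b hbN]
              exact hvb
          have hcov := hw.2 t
          rw [rowsum_eq hA (Ne.symm hbj) hrow, hwb] at hcov
          linarith
        · obtain ⟨t, b, hbj, hrow, hv'b⟩ := vertex_crit' hA hrows hv' hv'j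
          have hwb : w b = 0 := by
            by_cases hbv : v b = 0
            · exact hSF.2 b (Finset.mem_filter.2 ⟨Finset.mem_univ b, hbv, hv'b⟩)
            · have hbN : b ∈ jsgNodes v v' := Or.inl ⟨hbv, fun hx => hx hv'b⟩
              rw [hd b hbN]
              exact hv'b
          have hcov := hw.2 t
          rw [rowsum_eq hA (Ne.symm hbj) hrow, hwb] at hcov
          linarith
      have hIsum : (Iset.card : ℝ) ≤ ∑ j ∈ Iset, w j := by
        calc (Iset.card : ℝ) = ∑ _j ∈ Iset, (1:ℝ) := by simp
          _ ≤ _ := Finset.sum_le_sum hIone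
      constructor
      · rw [expand w, hTsum, hZsum, add_zero, hγ]
        linarith
      · intro heq
        rw [expand w, hTsum, hZsum, add_zero, hγ] at heq
        have hIeq : ∑ j ∈ Iset, w j = (Iset.card : ℝ) := by linarith
        have hIall : ∀ j ∈ Iset, w j = 1 := by
          by_contra hh
          push_neg at hh
          obtain ⟨j0, hj0, hj0ne⟩ := hh
          have hgt : (1:ℝ) < w j0 := lt_of_le_of_ne (hIone j0 hj0) (Ne.symm hj0ne)
          have hlow : ∑ j ∈ Iset, (if j = j0 then w j0 else 1) ≤ ∑ j ∈ Iset, w j := by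
            refine Finset.sum_le_sum fun j hj => ?_
            by_cases h' : j = j0
            · rw [if_pos h', h']
            · rw [if_neg h']
              exact hIone j hj
          have hval : ∑ j ∈ Iset, (if j = j0 then w j0 else 1)
              = (w j0 - 1) + (Iset.card : ℝ) := by
            have step : ∀ j ∈ Iset, (if j = j0 then w j0 else 1)
                = (if j = j0 then w j0 - 1 else 0) + 1 := fun j _ => by split_ifs <;> ring
            rw [Finset.sum_congr rfl step, Finset.sum_add_distrib,
              Finset.sum_ite_eq' Iset j0 (fun _ => w j0 - 1), if_pos hj0]
            simp
          rw [hval] at hlow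
          rw [hIeq] at hlow
          linarith
        rcases dichot with hd | hd
        · left
          funext j
          rcases binv j with h | h <;> rcases binv' j with h' | h'
          · rw [hSF.2 j (Finset.mem_filter.2 ⟨Finset.mem_univ j, h, h'⟩), h]
          · exact hd j (Or.inr ⟨(show v' j ≠ 0 by rw [h']; norm_num), fun hx => hx h⟩)
          · exact hd j (Or.inl ⟨(show v j ≠ 0 by rw [h]; norm_num), fun hx => hx h'⟩)
          · rw [hIall j (Finset.mem_filter.2 ⟨Finset.mem_univ j,
              (show v j ≠ 0 by rw [h]; norm_num), (show v' j ≠ 0 by rw [h']; norm_num)⟩), h]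
        · right
          funext j
          rcases binv j with h | h <;> rcases binv' j with h' | h'
          · rw [hSF.2 j (Finset.mem_filter.2 ⟨Finset.mem_univ j, h, h'⟩), h']
          · exact hd j (Or.inr ⟨(show v' j ≠ 0 by rw [h']; norm_num), fun hx => hx h⟩)
          · exact hd j (Or.inl ⟨(show v j ≠ 0 by rw [h]; norm_num), fun hx => hx h'⟩)
          · rw [hIall j (Finset.mem_filter.2 ⟨Finset.mem_univ j,
              (show v j ≠ 0 by rw [h]; norm_num), (show v' j ≠ 0 by rw [h']; norm_num)⟩), h']
  have hSins : genSet A ∩ {x | dotL c x = γ} = {v, v'} := by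
    apply Set.eq_of_subset_of_subset
    · rintro w ⟨hwS, hwf⟩
      exact (main w hwS).2 hwf
    · rintro x (rfl | rfl)
      · exact ⟨hvS, fv⟩
      · exact ⟨hv'S, fv'⟩
  rw [Qstar_eq_hull]
  exact segment_isExtreme_of_functional (f := dotL c) (fun w hw => (main w hw).1) hSins

end Stmt4Main
/-- for matrices with exactly two ones per row, adjacency in `Q*(A)` is
equivalent to connectivity of the joint saturation graph. -/
theorem stmt4 {m n : ℕ} (A : Matrix (Fin m) (Fin n) ℝ) (hA : IsBinaryMatrix A)
    (h2 : ∀ t, (rowSupp A t).ncard = 2)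
    (v v' : Fin n → ℝ) (hne : v ≠ v')
    (hv : IsVertex (Qstar A) v) (hv' : IsVertex (Qstar A) v') :
    AdjacentVerts (Qstar A) v v' ↔ JSGConnected A v v' := by
  constructor
  · exact fun hadj => dir_fwd hA h2 hv hv' hadj
  · exact fun hcon => ⟨hne, hv, hv', dir_bwd hA h2 hne hv hv' hcon⟩
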